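/- Let n, m ≥ 2 be integers. For positive integers k, s let D(k, s) = {f : {0, 1, …, k−1} → ℕ : Σ_i f(i) = s}, with cyclic shift σ(f)(i) = f(i − 1 mod k) and weight w(f) = Σ_{i=1}^{k−1} i·f(i) ∈ ℕ. For f ∈ D(n, m), let Y(f) be the Young diagram having exactly f(i) columns of height i for each i = 1, …, n−1 (so |Y(f)| = w(f)), and define the transpose t(f) ∈ D(m, n) by t(f)(j) = (number of rows of Y(f) of length exactly j) for j = 1, …, m−1 and t(f)(0) = n − (number of rows of Y(f)); equivalently Y(t(f)) is the transposed Young diagram Y(f)ᵗ. Let X = {(g, a) ∈ D(m, n) × ZMod(n·m) : a ≡ w(g) (mod m)}, and let ZMod m act on X by r·(g, a) = (σ^r g, a + r·n) (well defined since m·n ≡ 0 in ZMod(n·m)). Then this action is free, and the map f ↦ [(t(f), w(f) mod n·m)] is a well-defined bijection from D(n, m) onto the orbit set X / (ZMod m). -/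

import Mathlib

/-- The weight (number of boxes) of `f : ZMod k → ℕ`, viewed as the Young diagram
having `f(i)` columns of height `i`:  `w(f) = Σ_{i=1}^{k−1} i·f(i)`. -/
def lrWeight (k : ℕ) (f : ZMod k → ℕ) : ℕ :=
  ∑ i ∈ Finset.range k, i * f (i : ZMod k)

/-- The length of the `i`-th row (`i ≥ 1`) of the Young diagram `Y(f)` associated to
`f : ZMod n → ℕ`: the number of columns of height `≥ i`, i.e. `Σ_{h ≥ i} f(h)`. -/
def lrRow (n : ℕ) (f : ZMod n → ℕ) (i : ℕ) : ℕ :=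
  ∑ h ∈ (Finset.range n).filter (fun h => i ≤ h), f (h : ZMod n)

/-- The transpose `t(f) ∈ D(m,n)` of `f ∈ D(n,m)`: for `j = 1, …, m−1`, `t(f)(j)` is the
number of rows of `Y(f)` of length exactly `j`, and `t(f)(0)` is `n` minus the number of
rows of `Y(f)` (of length between `1` and `m−1`, full-length rows being discarded under
the convention that full columns `R_m` are identified with the empty diagram), so that
`Y(t(f))` is the transposed Young diagram `Y(f)ᵗ`. -/
def lrTranspose (n m : ℕ) (f : ZMod n → ℕ) : ZMod m → ℕ := fun j =>
  if j.val = 0 then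
    n - ((Finset.Icc 1 (n - 1)).filter
      (fun i => 1 ≤ lrRow n f i ∧ lrRow n f i ≤ m - 1)).card
  else ((Finset.Icc 1 (n - 1)).filter (fun i => lrRow n f i = j.val)).card

/-- The condition cutting out `X = {(g, a) ∈ D(m,n) × ZMod(n·m) : a ≡ w(g) (mod m)}`. -/
def lrCond (n m : ℕ) (p : (ZMod m → ℕ) × ZMod (n * m)) : Prop :=
  (∑ i ∈ Finset.range m, p.1 (i : ZMod m)) = n ∧
  ZMod.castHom (dvd_mul_left m n) (ZMod m) p.2 = ((lrWeight m p.1 : ℕ) : ZMod m)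

/-- The `ZMod m`-action `r·(g, a) = (σ^r g, a + r·n)` on pairs, where
`(σ^r g)(i) = g(i − r)` and `r·n` is computed in `ZMod (n·m)` via the lift `r.val`. -/
def lrAct (n m : ℕ) (r : ZMod m) (p : (ZMod m → ℕ) × ZMod (n * m)) :
    (ZMod m → ℕ) × ZMod (n * m) :=
  (fun i => p.1 (i - r), p.2 + (r.val : ZMod (n * m)) * (n : ZMod (n * m)))


open Finset
open Finset

lemma lrRow_succ {n : ℕ} (f : ZMod n → ℕ) {i : ℕ} (hi : i < n) :
    lrRow n f i = f (i : ZMod n) + lrRow n f (i + 1) := by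
  unfold lrRow
  have h : (range n).filter (fun h => i ≤ h)
      = insert i ((range n).filter (fun h => i + 1 ≤ h)) := by
    ext x; simp only [mem_filter, mem_range, mem_insert]; omega
  rw [h, Finset.sum_insert (by simp)]

lemma lrRow_of_ge {n : ℕ} (f : ZMod n → ℕ) {i : ℕ} (hi : n ≤ i) :
    lrRow n f i = 0 := by
  unfold lrRow
  rw [Finset.filter_false_of_mem, Finset.sum_empty]
  intro x hx; simp only [mem_range] at hx; omega

lemma lrRow_anti {n : ℕ} (f : ZMod n → ℕ) : Antitone (lrRow n f) := by
  intro i j hij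
  exact Finset.sum_le_sum_of_subset (by
    intro x hx; simp only [mem_filter, mem_range] at *; omega)

lemma lrRow_zero {n : ℕ} (f : ZMod n → ℕ) :
    lrRow n f 0 = ∑ i ∈ Finset.range n, f (i : ZMod n) := by
  unfold lrRow
  congr 1
  simp

lemma sum_range_eq_head_add_Icc {M : Type*} [AddCommMonoid M] (F : ℕ → M) (k : ℕ)
    (hk : 1 ≤ k) : ∑ j ∈ range k, F j = F 0 + ∑ j ∈ Icc 1 (k - 1), F j := by
  have h : range k = insert 0 (Icc 1 (k - 1)) := by
    ext x; simp only [mem_range, mem_insert, mem_Icc]; omega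
  rw [h, Finset.sum_insert (by simp)]

lemma Icc_filter_le (M y : ℕ) :
    (Icc 1 M).filter (fun c => c ≤ y) = Icc 1 (min M y) := by
  ext x; simp only [mem_filter, mem_Icc, le_min_iff]; omega

lemma card_Icc_one (M : ℕ) : (Icc 1 M).card = M := by
  rw [Nat.card_Icc]; omega

lemma card_filter_sum (s : Finset ℕ) (v : ℕ → ℕ) (a b : ℕ) :
    ∑ j ∈ Icc a b, ((s.filter (fun x => v x = j)).card)
      = (s.filter (fun x => a ≤ v x ∧ v x ≤ b)).card := by
  rw [Finset.card_eq_sum_card_fiberwise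
    (f := v) (t := Icc a b) (fun x hx => by simp only [mem_coe, mem_filter] at hx; simp [mem_Icc]; omega)]
  apply Finset.sum_congr rfl
  intro j hj
  congr 1
  ext x
  simp only [mem_filter, mem_Icc] at *
  constructor
  · rintro ⟨hx, rfl⟩; exact ⟨⟨hx, hj.1, hj.2⟩, rfl⟩
  · rintro ⟨⟨hx, _⟩, rfl⟩; exact ⟨hx, rfl⟩

lemma lrWeight_rows {k : ℕ} (f : ZMod k → ℕ) :
    lrWeight k f = ∑ i ∈ Icc 1 (k - 1), lrRow k f i := by
  unfold lrWeight lrRow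
  have : ∀ i : ℕ, ∑ h ∈ (range k).filter (fun h => i ≤ h), f (h : ZMod k)
      = ∑ h ∈ range k, if i ≤ h then f (h : ZMod k) else 0 := by
    intro i; rw [Finset.sum_filter]
  simp only [this]
  rw [Finset.sum_comm]
  apply Finset.sum_congr rfl
  intro h hh
  rw [← Finset.sum_filter, Finset.sum_const, Icc_filter_le, card_Icc_one]
  simp only [mem_range] at hh
  have : min (k - 1) h = h := by omega
  rw [this, smul_eq_mul]

lemma conj_iff (u : ℕ → ℕ) (hu : Antitone u) (N : ℕ) {c : ℕ} (hc1 : 1 ≤ c) (hcN : c ≤ N)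
    (i : ℕ) : i ≤ u c ↔ c ≤ ((Icc 1 N).filter (fun j => i ≤ u j)).card := by
  constructor
  · intro h
    calc c = (Icc 1 c).card := (card_Icc_one c).symm
    _ ≤ _ := Finset.card_le_card (by
        intro x hx
        simp only [mem_Icc, mem_filter] at *
        exact ⟨⟨hx.1, le_trans hx.2 hcN⟩, le_trans h (hu hx.2)⟩)
  · intro h
    by_contra hlt
    push_neg at hlt
    have hsub : (Icc 1 N).filter (fun j => i ≤ u j) ⊆ Icc 1 (c - 1) := by
      intro x hx
      simp only [mem_filter, mem_Icc] at *
      refine ⟨hx.1.1, ?_⟩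
      by_contra hxc
      push_neg at hxc
      have := hu (show c ≤ x by omega)
      omega
    have := Finset.card_le_card hsub
    rw [card_Icc_one] at this
    omega

lemma card_le_conj (u : ℕ → ℕ) (hu : Antitone u) (N M : ℕ) {i : ℕ} (hi1 : 1 ≤ i) :
    ((Icc 1 M).filter (fun c => i ≤ ((Icc 1 N).filter (fun j => c ≤ u j)).card)).card
      = if i ≤ N then min M (u i) else 0 := by
  split_ifs with hN
  · have : ∀ c : ℕ, (i ≤ ((Icc 1 N).filter (fun j => c ≤ u j)).card) ↔ c ≤ u i := by
      intro c
      exact (conj_iff u hu N hi1 hN c).symm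
    rw [Finset.filter_congr (fun c _ => by rw [this c]), Icc_filter_le, card_Icc_one]
  · rw [Finset.filter_false_of_mem, Finset.card_empty]
    intro x hx
    intro hcon
    have : ((Icc 1 N).filter (fun j => x ≤ u j)).card ≤ N := by
      calc _ ≤ (Icc 1 N).card := Finset.card_filter_le _ _
      _ = N := card_Icc_one N
    omega

lemma card_filter_eq_sub (s : Finset ℕ) (v : ℕ → ℕ) (i : ℕ) :
    (s.filter (fun c => v c = i)).card
      = (s.filter (fun c => i ≤ v c)).card - (s.filter (fun c => i + 1 ≤ v c)).card := by
  have h1 : s.filter (fun c => v c = i)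
      = s.filter (fun c => i ≤ v c) \ s.filter (fun c => i + 1 ≤ v c) := by
    ext x; simp only [mem_filter, mem_sdiff, not_and]; constructor
    · rintro ⟨hx, h⟩; exact ⟨⟨hx, by omega⟩, fun _ => by omega⟩
    · rintro ⟨⟨hx, h⟩, h2⟩; exact ⟨hx, by have := h2 hx; omega⟩
  rw [h1, Finset.card_sdiff_of_subset (by
    intro x hx; simp only [mem_filter] at *; exact ⟨hx.1, by omega⟩)]

lemma card_filter_between (s : Finset ℕ) (v : ℕ → ℕ) (a b : ℕ) (hab : a ≤ b + 1) :
    (s.filter (fun c => a ≤ v c ∧ v c ≤ b)).card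
      = (s.filter (fun c => a ≤ v c)).card - (s.filter (fun c => b + 1 ≤ v c)).card := by
  have h1 : s.filter (fun c => a ≤ v c ∧ v c ≤ b)
      = s.filter (fun c => a ≤ v c) \ s.filter (fun c => b + 1 ≤ v c) := by
    ext x; simp only [mem_filter, mem_sdiff, not_and]; constructor
    · rintro ⟨hx, h⟩; exact ⟨⟨hx, h.1⟩, fun _ => by omega⟩
    · rintro ⟨⟨hx, h⟩, h2⟩; exact ⟨hx, h, by have := h2 hx; omega⟩
  rw [h1, Finset.card_sdiff_of_subset (by
    intro x hx; simp only [mem_filter] at *; exact ⟨hx.1, by omega⟩)]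

lemma conj_count (u : ℕ → ℕ) (hu : Antitone u) (N M : ℕ) {i : ℕ}
    (hi1 : 1 ≤ i) (hiN : i ≤ N) :
    ((Icc 1 M).filter (fun c => ((Icc 1 N).filter (fun j => c ≤ u j)).card = i)).card
      = min M (u i) - (if i + 1 ≤ N then min M (u (i + 1)) else 0) := by
  rw [card_filter_eq_sub, card_le_conj u hu N M hi1, card_le_conj u hu N M (by omega),
    if_pos hiN]

lemma swap_card (A B : ℕ) (u : ℕ → ℕ) :
    ∑ a ∈ Icc 1 A, ((Icc 1 B).filter (fun b => a ≤ u b)).card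
      = ∑ b ∈ Icc 1 B, min A (u b) := by
  have : ∀ a, ((Icc 1 B).filter (fun b => a ≤ u b)).card
      = ∑ b ∈ Icc 1 B, if a ≤ u b then 1 else 0 := fun a => Finset.card_filter _ _
  simp only [this]
  rw [Finset.sum_comm]
  apply Finset.sum_congr rfl
  intro b _
  have : ∀ a : ℕ, (if a ≤ u b then (1:ℕ) else 0) = if a ≤ u b then 1 else 0 := fun _ => rfl
  rw [← Finset.sum_filter]
  have h2 : (Icc 1 A).filter (fun a => a ≤ u b) = Icc 1 (min A (u b)) := Icc_filter_le A (u b)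
  rw [h2, Finset.sum_const, card_Icc_one, smul_eq_mul, mul_one]

def lrK (n m : ℕ) (f : ZMod n → ℕ) : ℕ :=
  ((Icc 1 (n - 1)).filter (fun i => lrRow n f i = m)).card

section Forward

variable {n m : ℕ} (hn : 2 ≤ n) (hm : 2 ≤ m) (f : ZMod n → ℕ)
  (hf : ∑ i ∈ Finset.range n, f (i : ZMod n) = m)

include hf in
lemma r_le : ∀ i, lrRow n f i ≤ m := fun i => by
  calc lrRow n f i ≤ lrRow n f 0 := lrRow_anti f (Nat.zero_le i)
  _ = m := (lrRow_zero f).trans hf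

include hm hf in
lemma F4 : ∀ c, 1 ≤ c → c ≤ m →
    lrK n m f + lrRow m (lrTranspose n m f) c
      = ((Icc 1 (n - 1)).filter (fun i => c ≤ lrRow n f i)).card := by
  intro c hc1 hcm
  haveI : NeZero m := ⟨by omega⟩
  have hrow : lrRow m (lrTranspose n m f) c
      = ((Icc 1 (n - 1)).filter (fun i => c ≤ lrRow n f i ∧ lrRow n f i ≤ m - 1)).card := by
    have hdef : lrRow m (lrTranspose n m f) c
        = ∑ h ∈ (range m).filter (fun h => c ≤ h), lrTranspose n m f (h : ZMod m) := rfl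
    have hset : (range m).filter (fun h => c ≤ h) = Icc c (m - 1) := by
      ext x; simp only [mem_filter, mem_range, mem_Icc]; omega
    rw [hdef, hset, ← card_filter_sum (Icc 1 (n-1)) (lrRow n f) c (m - 1)]
    apply Finset.sum_congr rfl
    intro j hj
    simp only [mem_Icc] at hj
    have hjv : ((j : ℕ) : ZMod m).val = j := ZMod.val_cast_of_lt (by omega)
    unfold lrTranspose
    rw [hjv, if_neg (by omega)]
  have hK : lrK n m f = ((Icc 1 (n - 1)).filter (fun i => m ≤ lrRow n f i)).card := by
    unfold lrK
    congr 1
    apply Finset.filter_congr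
    intro i _
    have := r_le f hf i
    omega
  have hsub := Finset.card_le_card (show (Icc 1 (n-1)).filter (fun i => m ≤ lrRow n f i)
      ⊆ (Icc 1 (n-1)).filter (fun i => c ≤ lrRow n f i) by
    intro x hx; simp only [mem_filter] at *; exact ⟨hx.1, by omega⟩)
  rw [hrow, hK, card_filter_between _ _ _ _ (by omega)]
  have : m - 1 + 1 = m := by omega
  rw [this]
  omega

include hn hm hf in
lemma F1 : ∑ j ∈ Finset.range m, lrTranspose n m f (j : ZMod m) = n := by
  haveI : NeZero m := ⟨by omega⟩
  rw [sum_range_eq_head_add_Icc _ m (by omega)]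
  have hA : ∑ j ∈ Icc 1 (m - 1), lrTranspose n m f (j : ZMod m)
      = ((Icc 1 (n - 1)).filter (fun i => 1 ≤ lrRow n f i ∧ lrRow n f i ≤ m - 1)).card := by
    rw [← card_filter_sum (Icc 1 (n-1)) (lrRow n f) 1 (m - 1)]
    apply Finset.sum_congr rfl
    intro j hj
    simp only [mem_Icc] at hj
    have hjv : ((j : ℕ) : ZMod m).val = j := ZMod.val_cast_of_lt (by omega)
    unfold lrTranspose
    rw [hjv, if_neg (by omega)]
  rw [hA]
  have h0 : lrTranspose n m f ((0 : ℕ) : ZMod m)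
      = n - ((Icc 1 (n - 1)).filter (fun i => 1 ≤ lrRow n f i ∧ lrRow n f i ≤ m - 1)).card := by
    unfold lrTranspose
    rw [Nat.cast_zero, ZMod.val_zero, if_pos rfl]
  rw [h0]
  have hle : ((Icc 1 (n - 1)).filter (fun i => 1 ≤ lrRow n f i ∧ lrRow n f i ≤ m - 1)).card
      ≤ n - 1 := by
    calc _ ≤ (Icc 1 (n-1)).card := Finset.card_filter_le _ _
    _ = n - 1 := card_Icc_one _
  omega

include hn hm hf in
lemma F2 : lrWeight m (lrTranspose n m f) + m * lrK n m f = lrWeight n f := by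
  have key : ∑ j ∈ Icc 1 m, (lrK n m f + lrRow m (lrTranspose n m f) j) = lrWeight n f := by
    have h1 : ∀ j ∈ Icc 1 m, lrK n m f + lrRow m (lrTranspose n m f) j
        = ((Icc 1 (n - 1)).filter (fun i => j ≤ lrRow n f i)).card := by
      intro j hj; simp only [mem_Icc] at hj; exact F4 hm f hf j hj.1 hj.2
    rw [Finset.sum_congr rfl h1, swap_card]
    rw [lrWeight_rows]
    apply Finset.sum_congr rfl
    intro i _
    have := r_le f hf i
    omega
  rw [Finset.sum_add_distrib, Finset.sum_const, card_Icc_one, smul_eq_mul] at key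
  have hm1 : m = (m - 1) + 1 := by omega
  have hsplit : ∑ j ∈ Icc 1 m, lrRow m (lrTranspose n m f) j
      = lrWeight m (lrTranspose n m f) := by
    rw [lrWeight_rows]
    rw [hm1, Finset.sum_Icc_succ_top (by omega), lrRow_of_ge _ (by omega)]
    rw [← hm1, add_zero]
  omega

include hn hm hf in
lemma F3 : lrK n m f < lrTranspose n m f 0 := by
  haveI : NeZero m := ⟨by omega⟩
  have hdisj : Disjoint ((Icc 1 (n-1)).filter (fun i => lrRow n f i = m))
      ((Icc 1 (n-1)).filter (fun i => 1 ≤ lrRow n f i ∧ lrRow n f i ≤ m - 1)) := by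
    rw [Finset.disjoint_left]
    intro a ha hb
    simp only [mem_filter] at ha hb
    omega
  have hcard := Finset.card_union_of_disjoint hdisj
  have hle : (((Icc 1 (n-1)).filter (fun i => lrRow n f i = m))
      ∪ ((Icc 1 (n-1)).filter (fun i => 1 ≤ lrRow n f i ∧ lrRow n f i ≤ m - 1))).card
      ≤ n - 1 := by
    calc _ ≤ (Icc 1 (n-1)).card := Finset.card_le_card (by
      intro x hx; simp only [mem_union, mem_filter] at hx; rcases hx with h | h <;> exact h.1)
    _ = n - 1 := card_Icc_one _
  have h0 : lrTranspose n m f 0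
      = n - ((Icc 1 (n - 1)).filter (fun i => 1 ≤ lrRow n f i ∧ lrRow n f i ≤ m - 1)).card := by
    unfold lrTranspose
    rw [if_pos ZMod.val_zero]
  rw [h0]
  unfold lrK at *
  omega

include hn hm hf in
lemma F5 : ∀ i : ℕ, 1 ≤ i → i ≤ n - 1 →
    f ((i : ℕ) : ZMod n)
      = ((Icc 1 m).filter (fun c => lrK n m f + lrRow m (lrTranspose n m f) c = i)).card := by
  intro i hi1 hin
  have hcongr : (Icc 1 m).filter (fun c => lrK n m f + lrRow m (lrTranspose n m f) c = i)
      = (Icc 1 m).filter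
          (fun c => ((Icc 1 (n-1)).filter (fun j => c ≤ lrRow n f j)).card = i) := by
    apply Finset.filter_congr
    intro c hc
    simp only [mem_Icc] at hc
    rw [F4 hm f hf c hc.1 hc.2]
  rw [hcongr, conj_count (lrRow n f) (lrRow_anti f) (n-1) m hi1 hin]
  have hfr : lrRow n f i = f ((i : ℕ) : ZMod n) + lrRow n f (i + 1) :=
    lrRow_succ f (by omega)
  have hri := r_le f hf i
  have hri1 := r_le f hf (i + 1)
  split_ifs with h
  · omega
  · have : lrRow n f (i + 1) = 0 := lrRow_of_ge f (by omega)
    omega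

end Forward

def lrInv (n m : ℕ) (g : ZMod m → ℕ) (k : ℕ) : ZMod n → ℕ :=
  fun i => ((Icc 1 m).filter (fun c => k + lrRow m g c = i.val)).card

section Inverse

variable {n m : ℕ} (hn : 2 ≤ n) (hm : 2 ≤ m) (g : ZMod m → ℕ)
  (hg : ∑ j ∈ Finset.range m, g (j : ZMod m) = n) (k : ℕ) (hk : k < g 0)

lemma hp_anti : Antitone (fun c => k + lrRow m g c) :=
  fun _ _ h => Nat.add_le_add_left (lrRow_anti g h) k

include hm hg hk in
lemma row_one_g : lrRow m g 1 + g 0 = n := by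
  have h0 : lrRow m g 0 = n := by
    rw [lrRow_zero g, hg]
  have := lrRow_succ g (show 0 < m by omega)
  rw [Nat.cast_zero] at this
  simp only [Nat.zero_add] at this
  omega

include hm hg hk in
lemma hp_le : ∀ c, 1 ≤ c → k + lrRow m g c ≤ n - 1 := by
  intro c hc
  have h1 := row_one_g hm g hg k hk
  have h2 : lrRow m g c ≤ lrRow m g 1 := lrRow_anti g hc
  omega

include hn hm hg hk in
lemma B1 : ∑ i ∈ Finset.range n, lrInv n m g k (i : ZMod n) = m := by
  haveI : NeZero n := ⟨by omega⟩
  have hval : ∀ i ∈ range n, lrInv n m g k (i : ZMod n)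
      = ((Icc 1 m).filter (fun c => k + lrRow m g c = i)).card := by
    intro i hi
    simp only [mem_range] at hi
    unfold lrInv
    rw [ZMod.val_cast_of_lt hi]
  rw [Finset.sum_congr rfl hval]
  rw [← Finset.card_eq_sum_card_fiberwise (f := fun c => k + lrRow m g c) (t := range n)
    (fun c hc => by
      simp only [mem_coe, mem_Icc] at hc
      simp only [mem_coe, mem_range]
      have := hp_le hm g hg k hk c hc.1
      omega)]
  exact card_Icc_one m

include hn hm hg hk in
lemma Brow : ∀ i, 1 ≤ i → lrRow n (lrInv n m g k) i
    = ((Icc 1 m).filter (fun c => i ≤ k + lrRow m g c)).card := by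
  intro i hi
  haveI : NeZero n := ⟨by omega⟩
  have hdef : lrRow n (lrInv n m g k) i
      = ∑ h ∈ (range n).filter (fun h => i ≤ h), lrInv n m g k (h : ZMod n) := rfl
  have hset : (range n).filter (fun h => i ≤ h) = Icc i (n - 1) := by
    ext x; simp only [mem_filter, mem_range, mem_Icc]; omega
  have hval : ∀ h ∈ Icc i (n - 1), lrInv n m g k (h : ZMod n)
      = ((Icc 1 m).filter (fun c => k + lrRow m g c = h)).card := by
    intro h hh
    simp only [mem_Icc] at hh
    unfold lrInv
    rw [ZMod.val_cast_of_lt (by omega)]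
  rw [hdef, hset, Finset.sum_congr rfl hval,
    card_filter_sum (Icc 1 m) (fun c => k + lrRow m g c) i (n - 1)]
  congr 1
  apply Finset.filter_congr
  intro c hc
  simp only [mem_Icc] at hc
  have := hp_le hm g hg k hk c hc.1
  omega

include hn hm hg hk in
lemma B2 : lrTranspose n m (lrInv n m g k) = g := by
  haveI : NeZero m := ⟨by omega⟩
  funext j
  have hrow : ∀ i ∈ Icc 1 (n - 1), ∀ y : ℕ, (lrRow n (lrInv n m g k) i = y)
      ↔ (((Icc 1 m).filter (fun c => i ≤ k + lrRow m g c)).card = y) := by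
    intro i hi y
    simp only [mem_Icc] at hi
    rw [Brow hn hm g hg k hk i hi.1]
  by_cases h0 : j.val = 0
  · have hj : j = 0 := by
      have := ZMod.val_eq_zero j
      tauto
    unfold lrTranspose
    rw [if_pos h0, hj]
    have hA : ((Icc 1 (n-1)).filter
        (fun i => 1 ≤ lrRow n (lrInv n m g k) i ∧ lrRow n (lrInv n m g k) i ≤ m - 1))
        = ((Icc 1 (n-1)).filter (fun i =>
            1 ≤ ((Icc 1 m).filter (fun c => i ≤ k + lrRow m g c)).card
            ∧ ((Icc 1 m).filter (fun c => i ≤ k + lrRow m g c)).card ≤ m - 1)) := by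
      apply Finset.filter_congr
      intro i hi
      simp only [mem_Icc] at hi
      rw [Brow hn hm g hg k hk i hi.1]
    rw [hA, card_filter_between _ _ _ _ (by omega)]
    have hc1 : ((Icc 1 (n-1)).filter (fun i =>
        1 ≤ ((Icc 1 m).filter (fun c => i ≤ k + lrRow m g c)).card)).card
        = min (n-1) (k + lrRow m g 1) := by
      rw [card_le_conj _ (hp_anti g k) m (n-1) (le_refl 1), if_pos (by omega)]
    have hcm : ((Icc 1 (n-1)).filter (fun i =>
        m - 1 + 1 ≤ ((Icc 1 m).filter (fun c => i ≤ k + lrRow m g c)).card)).card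
        = min (n-1) (k + lrRow m g m) := by
      have hmm : m - 1 + 1 = m := by omega
      rw [hmm, card_le_conj _ (hp_anti g k) m (n-1) (by omega), if_pos (le_refl m)]
    rw [hc1, hcm]
    have hrg1 := row_one_g hm g hg k hk
    have hple1 := hp_le hm g hg k hk 1 (le_refl 1)
    have hplem := hp_le hm g hg k hk m (by omega)
    have hrm : lrRow m g m = 0 := lrRow_of_ge g (le_refl m)
    have e1 : min (n-1) (k + lrRow m g 1) = k + lrRow m g 1 := by omega
    have e2 : min (n-1) (k + lrRow m g m) = k := by omega
    rw [e1, e2]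
    omega
  · unfold lrTranspose
    rw [if_neg h0]
    have hj : j = ((j.val : ℕ) : ZMod m) := by
      rw [ZMod.natCast_val, ZMod.cast_id]
    have hjv : 1 ≤ j.val ∧ j.val ≤ m - 1 := by
      have := ZMod.val_lt j
      omega
    have hA : ((Icc 1 (n-1)).filter (fun i => lrRow n (lrInv n m g k) i = j.val))
        = ((Icc 1 (n-1)).filter (fun i =>
            ((Icc 1 m).filter (fun c => i ≤ k + lrRow m g c)).card = j.val)) := by
      apply Finset.filter_congr
      intro i hi
      simp only [mem_Icc] at hi
      rw [Brow hn hm g hg k hk i hi.1]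
    rw [hA, conj_count _ (hp_anti g k) m (n-1) hjv.1 (by omega), if_pos (by omega)]
    have hple1 := hp_le hm g hg k hk j.val hjv.1
    have hple2 := hp_le hm g hg k hk (j.val + 1) (by omega)
    have e1 : min (n-1) (k + lrRow m g j.val) = k + lrRow m g j.val := by omega
    have e2 : min (n-1) (k + lrRow m g (j.val + 1)) = k + lrRow m g (j.val + 1) := by omega
    rw [e1, e2]
    have hsucc : lrRow m g j.val = g ((j.val : ℕ) : ZMod m) + lrRow m g (j.val + 1) :=
      lrRow_succ g (by omega)
    rw [← hj] at hsucc
    omega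

include hn hm hg hk in
lemma B3 : lrWeight n (lrInv n m g k) = lrWeight m g + m * k := by
  rw [lrWeight_rows]
  have h1 : ∀ i ∈ Icc 1 (n-1), lrRow n (lrInv n m g k) i
      = ((Icc 1 m).filter (fun c => i ≤ k + lrRow m g c)).card := by
    intro i hi
    simp only [mem_Icc] at hi
    exact Brow hn hm g hg k hk i hi.1
  rw [Finset.sum_congr rfl h1, swap_card]
  have h2 : ∀ c ∈ Icc 1 m, min (n-1) (k + lrRow m g c) = k + lrRow m g c := by
    intro c hc
    simp only [mem_Icc] at hc
    have := hp_le hm g hg k hk c hc.1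
    omega
  rw [Finset.sum_congr rfl h2, Finset.sum_add_distrib, Finset.sum_const, card_Icc_one,
    smul_eq_mul]
  have hsplit : ∑ c ∈ Icc 1 m, lrRow m g c = lrWeight m g := by
    have hins : Icc 1 m = insert m (Icc 1 (m-1)) := by
      ext x; simp only [mem_Icc, mem_insert]; omega
    rw [hins, Finset.sum_insert (by simp only [mem_Icc]; omega), lrRow_of_ge _ (le_refl m),
      zero_add, lrWeight_rows]
  rw [hsplit]
  ring

end Inverse

def lrRot (m : ℕ) (g : ZMod m → ℕ) : ZMod m → ℕ := fun i => g (i - 1)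

def lrS (m : ℕ) (g : ZMod m → ℕ) (t : ℕ) : ℕ :=
  ∑ v ∈ Finset.range t, g ((m - 1 - v : ℕ) : ZMod m)

section Rot

variable {m : ℕ}

lemma rot_iter (g : ZMod m → ℕ) : ∀ t (i : ZMod m),
    (lrRot m)^[t] g i = g (i - (t : ℕ)) := by
  intro t
  induction t with
  | zero => intro i; simp
  | succ t ih =>
    intro i
    rw [Function.iterate_succ_apply']
    show (lrRot m)^[t] g (i - 1) = _
    rw [ih (i - 1)]
    congr 1
    push_cast
    ring

lemma rot_sum (hm : 1 ≤ m) (g : ZMod m → ℕ) :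
    ∑ j ∈ Finset.range m, lrRot m g (j : ZMod m) = ∑ j ∈ Finset.range m, g (j : ZMod m) := by
  obtain ⟨m', rfl⟩ : ∃ m', m = m' + 1 := ⟨m - 1, by omega⟩
  rw [Finset.sum_range_succ' (fun j => lrRot (m'+1) g (j : ZMod (m'+1))) m',
    Finset.sum_range_succ (fun j => g (j : ZMod (m'+1))) m']
  congr 1
  · apply Finset.sum_congr rfl
    intro i _
    show g (((i+1 : ℕ) : ZMod (m'+1)) - 1) = _
    congr 1
    push_cast
    ring
  · show g (((0:ℕ) : ZMod (m'+1)) - 1) = g ((m' : ℕ) : ZMod (m'+1))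
    congr 1
    have : ((m' + 1 : ℕ) : ZMod (m'+1)) = 0 := by
      exact_mod_cast ZMod.natCast_self (m'+1)
    push_cast at this ⊢
    linear_combination -this

lemma rot_weight (hm : 1 ≤ m) (g : ZMod m → ℕ) :
    lrWeight m (lrRot m g) + m * g (((m - 1 : ℕ) : ZMod m))
      = lrWeight m g + ∑ j ∈ Finset.range m, g (j : ZMod m) := by
  obtain ⟨m', rfl⟩ : ∃ m', m = m' + 1 := ⟨m - 1, by omega⟩
  have hm1 : m' + 1 - 1 = m' := by omega
  rw [hm1]
  have lhs : lrWeight (m'+1) (lrRot (m'+1) g) = ∑ i ∈ range m', (i+1) * g ((i : ℕ) : ZMod (m'+1)) := by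
    unfold lrWeight
    rw [Finset.sum_range_succ' (fun j => j * lrRot (m'+1) g (j : ZMod (m'+1))) m']
    have h0 : (0 : ℕ) * lrRot (m'+1) g ((0:ℕ) : ZMod (m'+1)) = 0 := by ring
    rw [h0, add_zero]
    apply Finset.sum_congr rfl
    intro i _
    show (i+1) * g (((i+1 : ℕ) : ZMod (m'+1)) - 1) = _
    congr 2
    push_cast
    ring
  have rhs : lrWeight (m'+1) g + ∑ j ∈ Finset.range (m'+1), g (j : ZMod (m'+1))
      = (∑ i ∈ range m', (i+1) * g ((i : ℕ) : ZMod (m'+1)))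
        + (m'+1) * g ((m' : ℕ) : ZMod (m'+1)) := by
    unfold lrWeight
    rw [← Finset.sum_add_distrib]
    have : ∀ j ∈ range (m'+1), j * g ((j : ℕ) : ZMod (m'+1)) + g ((j : ℕ) : ZMod (m'+1))
        = (j+1) * g ((j : ℕ) : ZMod (m'+1)) := by
      intro j _; ring
    rw [Finset.sum_congr rfl this, Finset.sum_range_succ]
  omega

lemma rot_iter_sum (hm : 1 ≤ m) (g : ZMod m → ℕ) : ∀ t,
    ∑ j ∈ Finset.range m, (lrRot m)^[t] g (j : ZMod m) = ∑ j ∈ Finset.range m, g (j : ZMod m) := by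
  intro t
  induction t with
  | zero => simp
  | succ t ih =>
    rw [Function.iterate_succ_apply']
    rw [rot_sum hm ((lrRot m)^[t] g), ih]

lemma lrS_succ (g : ZMod m → ℕ) (t : ℕ) :
    lrS m g (t + 1) = lrS m g t + g ((m - 1 - t : ℕ) : ZMod m) := Finset.sum_range_succ _ _

lemma lrS_mono (g : ZMod m → ℕ) : Monotone (lrS m g) := by
  intro a b hab
  exact Finset.sum_le_sum_of_subset (Finset.range_subset_range.2 hab)

lemma lrS_top (g : ZMod m → ℕ) : lrS m g m = ∑ j ∈ Finset.range m, g (j : ZMod m) :=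
  Finset.sum_range_reflect (fun v => g ((v : ℕ) : ZMod m)) m

lemma C1 (hm : 1 ≤ m) (g : ZMod m → ℕ) : ∀ t, t ≤ m →
    lrWeight m ((lrRot m)^[t] g) + m * lrS m g t
      = lrWeight m g + t * (∑ j ∈ Finset.range m, g (j : ZMod m)) := by
  intro t
  induction t with
  | zero => intro _; simp [lrS]
  | succ t ih =>
    intro ht
    have ihh := ih (by omega)
    have hstep := rot_weight hm ((lrRot m)^[t] g)
    rw [Function.iterate_succ_apply']
    have hval : (lrRot m)^[t] g (((m - 1 : ℕ) : ZMod m)) = g ((m - 1 - t : ℕ) : ZMod m) := by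
      rw [rot_iter]
      congr 1
      have h1 : ((m - 1 - t : ℕ) : ZMod m) = ((m-1 : ℕ) : ZMod m) - ((t:ℕ) : ZMod m) := by
        rw [Nat.cast_sub (by omega)]
      rw [h1]
    rw [hval] at hstep
    rw [rot_iter_sum hm g t] at hstep
    have hS : m * lrS m g (t+1) = m * lrS m g t + m * g ((m - 1 - t : ℕ) : ZMod m) := by
      rw [lrS_succ, Nat.mul_add]
    have he : (t+1) * (∑ j ∈ Finset.range m, g (j : ZMod m))
        = t * (∑ j ∈ Finset.range m, g (j : ZMod m)) + (∑ j ∈ Finset.range m, g (j : ZMod m)) := by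
      ring
    omega

end Rot

def lrD (n m : ℕ) (p : (ZMod m → ℕ) × ZMod (n * m)) : ℕ :=
  (p.2 - ((lrWeight m p.1 : ℕ) : ZMod (n * m))).val

def lrGood (n m : ℕ) (p : (ZMod m → ℕ) × ZMod (n * m)) : Prop :=
  lrD n m p / m < p.1 0

section Act

variable {n m : ℕ} (hn : 2 ≤ n) (hm : 2 ≤ m)

include hm in
lemma act_zero (p : (ZMod m → ℕ) × ZMod (n * m)) : lrAct n m 0 p = p := by
  haveI : NeZero m := ⟨by omega⟩
  unfold lrAct
  ext1
  · funext i; simp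
  · simp [ZMod.val_zero]

include hn hm in
lemma act_add (r s : ZMod m) (p : (ZMod m → ℕ) × ZMod (n * m)) :
    lrAct n m r (lrAct n m s p) = lrAct n m (r + s) p := by
  haveI : NeZero m := ⟨by omega⟩
  haveI : NeZero (n * m) := ⟨by positivity⟩
  unfold lrAct
  ext1
  · funext i
    show p.1 (i - r - s) = p.1 (i - (r + s))
    congr 1; ring
  · show p.2 + (s.val : ZMod (n*m)) * n + (r.val : ZMod (n*m)) * n
      = p.2 + ((r + s).val : ZMod (n*m)) * n
    have h0 : (m : ZMod (n*m)) * (n : ZMod (n*m)) = 0 := by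
      rw [← Nat.cast_mul, mul_comm m n, ZMod.natCast_self]
    have key : ∀ u : ℕ, ((u % m : ℕ) : ZMod (n*m)) * n = ((u : ℕ) : ZMod (n*m)) * n := by
      intro u
      conv_rhs => rw [← Nat.div_add_mod u m]
      push_cast
      linear_combination (-(u / m : ℕ) : ZMod (n*m)) * h0
    rw [ZMod.val_add, key (r.val + s.val)]
    push_cast
    ring

include hm in
lemma act_fst (r : ZMod m) (p : (ZMod m → ℕ) × ZMod (n * m)) :
    (lrAct n m r p).1 = (lrRot m)^[r.val] p.1 := by
  haveI : NeZero m := ⟨by omega⟩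
  funext i
  show p.1 (i - r) = _
  rw [rot_iter]
  congr 1
  rw [ZMod.natCast_val, ZMod.cast_id]

include hn hm in
lemma cond_act (p : (ZMod m → ℕ) × ZMod (n * m)) (hp : lrCond n m p) (r : ZMod m) :
    lrCond n m (lrAct n m r p) := by
  haveI : NeZero m := ⟨by omega⟩
  haveI : NeZero (n * m) := ⟨by positivity⟩
  obtain ⟨hp1, hp2⟩ := hp
  constructor
  · have h1 : ∀ j : ℕ, (lrAct n m r p).1 (j : ZMod m) = (lrRot m)^[r.val] p.1 (j : ZMod m) := by
      intro j; rw [act_fst hm]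
    simp only [h1]
    rw [rot_iter_sum (by omega) p.1 r.val, hp1]
  · have hfst : (lrAct n m r p).1 = (lrRot m)^[r.val] p.1 := act_fst hm r p
    have hc1 := C1 (by omega) p.1 r.val (le_of_lt (ZMod.val_lt r))
    rw [hp1] at hc1
    have hc1m : ((lrWeight m ((lrRot m)^[r.val] p.1) : ℕ) : ZMod m)
        = ((lrWeight m p.1 : ℕ) : ZMod m) + ((r.val * n : ℕ) : ZMod m) := by
      have := congrArg (fun x : ℕ => (x : ZMod m)) hc1
      push_cast at this ⊢
      rw [ZMod.natCast_self] at this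
      linear_combination this
    show ZMod.castHom (dvd_mul_left m n) (ZMod m)
        (p.2 + (r.val : ZMod (n*m)) * (n : ZMod (n*m))) = _
    rw [map_add, hp2, hfst, hc1m]
    congr 1
    rw [show (r.val : ZMod (n*m)) * (n : ZMod (n*m)) = ((r.val * n : ℕ) : ZMod (n*m)) by
      push_cast; ring]
    rw [map_natCast]

include hn hm in
lemma D_lt (p : (ZMod m → ℕ) × ZMod (n * m)) : lrD n m p / m < n := by
  haveI : NeZero (n * m) := ⟨by positivity⟩
  have := ZMod.val_lt (p.2 - ((lrWeight m p.1 : ℕ) : ZMod (n * m)))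
  unfold lrD
  rw [Nat.div_lt_iff_lt_mul (by omega)]
  omega

include hn hm in
lemma D_dvd (p : (ZMod m → ℕ) × ZMod (n * m)) (hp : lrCond n m p) : m ∣ lrD n m p := by
  haveI : NeZero m := ⟨by omega⟩
  haveI : NeZero (n * m) := ⟨by positivity⟩
  set y := p.2 - ((lrWeight m p.1 : ℕ) : ZMod (n * m)) with hy
  have h1 : ZMod.castHom (dvd_mul_left m n) (ZMod m) y = 0 := by
    rw [hy, map_sub, hp.2, map_natCast, sub_self]
  have h2 : ((y.val : ℕ) : ZMod (n*m)) = y := by rw [ZMod.natCast_val, ZMod.cast_id]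
  rw [← h2, map_natCast] at h1
  exact (ZMod.natCast_eq_zero_iff y.val m).1 h1

include hn hm in
lemma D_pt (f : ZMod n → ℕ) (hf : ∑ i ∈ Finset.range n, f (i : ZMod n) = m) :
    lrD n m (lrTranspose n m f, ((lrWeight n f : ℕ) : ZMod (n * m))) = m * lrK n m f := by
  haveI : NeZero (n * m) := ⟨by positivity⟩
  have hF2 := F2 hn hm f hf
  have hKle : lrK n m f ≤ n - 1 := by
    calc lrK n m f ≤ (Icc 1 (n-1)).card := Finset.card_filter_le _ _
    _ = n - 1 := card_Icc_one _
  unfold lrD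
  have h1 : ((lrWeight n f : ℕ) : ZMod (n*m))
      - ((lrWeight m (lrTranspose n m f) : ℕ) : ZMod (n*m))
      = ((m * lrK n m f : ℕ) : ZMod (n*m)) := by
    have := congrArg (fun x : ℕ => (x : ZMod (n*m))) hF2
    push_cast at this ⊢
    linear_combination -this
  show (((lrWeight n f : ℕ) : ZMod (n*m))
      - ((lrWeight m (lrTranspose n m f) : ℕ) : ZMod (n*m))).val = _
  rw [h1, ZMod.val_cast_of_lt]
  calc m * lrK n m f ≤ m * (n-1) := Nat.mul_le_mul_left m hKle
  _ < n * m := by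
      have h := Nat.mul_lt_mul_of_pos_left (show n-1 < n by omega) (show 0 < m by omega)
      rw [mul_comm n m]
      exact h

include hn hm in
lemma D_act (p : (ZMod m → ℕ) × ZMod (n * m)) (hp : lrCond n m p) (r : ZMod m) :
    lrD n m (lrAct n m r p) = m * ((lrD n m p / m + lrS m p.1 r.val) % n) := by
  haveI : NeZero m := ⟨by omega⟩
  haveI : NeZero (n * m) := ⟨by positivity⟩
  set t := r.val with ht
  set K := lrD n m p / m with hKdef
  have hdvd := D_dvd hn hm p hp
  have hmK : m * K = lrD n m p := Nat.mul_div_cancel' hdvd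
  have hDval : ((lrD n m p : ℕ) : ZMod (n*m))
      = p.2 - ((lrWeight m p.1 : ℕ) : ZMod (n * m)) := by
    unfold lrD
    rw [ZMod.natCast_val, ZMod.cast_id]
  have hc1 := C1 (show 1 ≤ m by omega) p.1 t (le_of_lt (ZMod.val_lt r))
  rw [hp.1] at hc1
  have hc1c := congrArg (fun x : ℕ => (x : ZMod (n*m))) hc1
  have hfst : (lrAct n m r p).1 = (lrRot m)^[t] p.1 := act_fst hm r p
  have hE : (lrAct n m r p).2
      - ((lrWeight m ((lrRot m)^[t] p.1) : ℕ) : ZMod (n*m))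
      = ((m * (K + lrS m p.1 t) : ℕ) : ZMod (n*m)) := by
    show p.2 + (t : ZMod (n*m)) * (n : ZMod (n*m)) - _ = _
    have hp2 : p.2 - ((lrWeight m p.1 : ℕ) : ZMod (n * m)) = ((m * K : ℕ) : ZMod (n*m)) := by
      rw [← hDval, hmK]
    push_cast at hc1c hp2 ⊢
    linear_combination hp2 - hc1c
  unfold lrD
  rw [hfst, hE, ZMod.val_natCast]
  have e : ∀ x : ℕ, x % (n * m) = x % (m * n) := fun x => by rw [Nat.mul_comm]
  rw [e, Nat.mul_mod_mul_left]

end Act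

lemma exists_unique_hit (S : ℕ → ℕ) (hS : Monotone S) (h0 : S 0 = 0) (m y : ℕ)
    (hm : 1 ≤ m) (hy1 : 1 ≤ y) (hym : y ≤ S m) :
    ∃! s : ℕ, (1 ≤ s ∧ s ≤ m) ∧ (S (s - 1) < y ∧ y ≤ S s) := by
  classical
  have hex : ∃ s, y ≤ S s := ⟨m, hym⟩
  have hspec : y ≤ S (Nat.find hex) := Nat.find_spec hex
  have hle : Nat.find hex ≤ m := Nat.find_min' hex hym
  have hpos : 1 ≤ Nat.find hex := by
    rcases Nat.eq_zero_or_pos (Nat.find hex) with h | h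
    · rw [h] at hspec; omega
    · exact h
  have hprev : S (Nat.find hex - 1) < y := by
    have := Nat.find_min hex (show Nat.find hex - 1 < Nat.find hex by omega)
    omega
  refine ⟨Nat.find hex, ⟨⟨hpos, hle⟩, hprev, hspec⟩, ?_⟩
  rintro s' ⟨⟨h1, h2⟩, h3, h4⟩
  by_contra hne
  rcases lt_or_gt_of_ne hne with h | h
  · have := Nat.find_min hex h; omega
  · have : S (Nat.find hex) ≤ S (s' - 1) := hS (by omega); omega

lemma G1 {n m : ℕ} (hn : 2 ≤ n) (hm : 2 ≤ m) (p : (ZMod m → ℕ) × ZMod (n * m))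
    (hp : lrCond n m p) : ∃! r : ZMod m, lrGood n m (lrAct n m r p) := by
  haveI : NeZero m := ⟨by omega⟩
  haveI : NeZero (n * m) := ⟨by positivity⟩
  obtain ⟨K, hKdef⟩ : ∃ K : ℕ, lrD n m p / m = K := ⟨_, rfl⟩
  have hK : K < n := hKdef ▸ D_lt hn hm p
  have hSm : lrS m p.1 m = n := by rw [lrS_top, hp.1]
  have hgood_iff : ∀ r : ZMod m, lrGood n m (lrAct n m r p)
      ↔ ((K + lrS m p.1 r.val) % n < (lrRot m)^[r.val] p.1 0) := by
    intro r
    unfold lrGood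
    rw [D_act hn hm p hp r, hKdef, Nat.mul_div_cancel_left _ (show 0 < m by omega),
      act_fst hm r p]
  have hrot0 : ∀ t : ℕ, t ≤ m → (lrRot m)^[t] p.1 0 = p.1 (((m - t : ℕ) : ZMod m)) := by
    intro t htm
    rw [rot_iter]
    congr 1
    rw [Nat.cast_sub htm, ZMod.natCast_self]
  have hPQ : ∀ s : ℕ, 1 ≤ s → s ≤ m →
      ((K + lrS m p.1 s) % n < p.1 ((m - s : ℕ) : ZMod m)
        ↔ (lrS m p.1 (s-1) < n - K ∧ n - K ≤ lrS m p.1 s)) := by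
    intro s h1 h2
    have hss : lrS m p.1 s = lrS m p.1 (s-1) + p.1 ((m - s : ℕ) : ZMod m) := by
      have h := lrS_succ p.1 (s-1)
      rw [show s - 1 + 1 = s by omega, show m - 1 - (s-1) = m - s by omega] at h
      exact h
    have hle : lrS m p.1 s ≤ n := le_trans (lrS_mono p.1 h2) (le_of_eq hSm)
    constructor
    · intro hP
      by_cases hc : K + lrS m p.1 s < n
      · rw [Nat.mod_eq_of_lt hc] at hP; omega
      · push_neg at hc
        have h3 : (K + lrS m p.1 s) % n = K + lrS m p.1 s - n := by
          have hsplit : K + lrS m p.1 s = n + (K + lrS m p.1 s - n) := by omega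
          conv_lhs => rw [hsplit]
          rw [Nat.add_mod_left, Nat.mod_eq_of_lt (by omega)]
        rw [h3] at hP
        omega
    · rintro ⟨hq1, hq2⟩
      have h3 : (K + lrS m p.1 s) % n = K + lrS m p.1 s - n := by
        have hsplit : K + lrS m p.1 s = n + (K + lrS m p.1 s - n) := by omega
        conv_lhs => rw [hsplit]
        rw [Nat.add_mod_left, Nat.mod_eq_of_lt (by omega)]
      rw [h3]
      omega
  have hbridge : ∀ r : ZMod m, lrGood n m (lrAct n m r p) ↔
      (lrS m p.1 ((if r.val = 0 then m else r.val) - 1) < n - K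
        ∧ n - K ≤ lrS m p.1 (if r.val = 0 then m else r.val)) := by
    intro r
    rw [hgood_iff r]
    by_cases h0 : r.val = 0
    · rw [h0, if_pos rfl, ← hPQ m (by omega) (le_refl m)]
      have e1 : lrS m p.1 0 = 0 := by simp [lrS]
      have e4 : ((m - m : ℕ) : ZMod m) = 0 := by simp
      rw [e1, hSm, e4, Function.iterate_zero_apply, Nat.add_zero, Nat.add_mod_right,
        Nat.mod_eq_of_lt hK]
    · have h2 : r.val ≤ m := le_of_lt (ZMod.val_lt r)
      rw [if_neg h0, ← hPQ r.val (by omega) h2, hrot0 r.val h2]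
  obtain ⟨s, ⟨⟨hs1, hsm⟩, hQ⟩, huniq⟩ :=
    exists_unique_hit (lrS m p.1) (lrS_mono p.1) (by simp [lrS]) m (n - K)
      (by omega) (by omega) (by rw [hSm]; omega)
  refine ⟨(s : ZMod m), ?_, ?_⟩
  · show lrGood n m (lrAct n m ((s : ℕ) : ZMod m) p)
    rw [hbridge]
    have hv : (if ((s : ℕ) : ZMod m).val = 0 then m else ((s : ℕ) : ZMod m).val) = s := by
      by_cases hsm' : s = m
      · rw [hsm', ZMod.natCast_self, ZMod.val_zero, if_pos rfl]
      · rw [ZMod.val_cast_of_lt (by omega), if_neg (by omega)]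
    rw [hv]
    exact hQ
  · intro r' hr'
    have hb := (hbridge r').mp hr'
    have hs' : (1 ≤ (if r'.val = 0 then m else r'.val))
        ∧ (if r'.val = 0 then m else r'.val) ≤ m := by
      have := ZMod.val_lt r'
      split_ifs <;> omega
    have heq := huniq _ ⟨hs', hb⟩
    by_cases h0 : r'.val = 0
    · rw [if_pos h0] at heq
      rw [← heq, ZMod.natCast_self]
      exact (ZMod.val_eq_zero r').1 h0
    · rw [if_neg h0] at heq
      rw [← heq, ZMod.natCast_val, ZMod.cast_id]

/-- **Level-rank duality between `L_m(sl_n)` and `L_n(sl_m)`, parameter level.**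
The `ZMod m`-action on `X` is free, and `f ↦ [(t(f), w(f) mod n·m)]` is a well-defined
bijection from `D(n,m)` onto the orbit set `X / ZMod m`. -/
theorem stmt_13 (n m : ℕ) (hn : 2 ≤ n) (hm : 2 ≤ m) :
    (∀ (r : ZMod m) (p : (ZMod m → ℕ) × ZMod (n * m)),
      lrCond n m p → lrAct n m r p = p → r = 0) ∧
    ∃ Φ : {f : ZMod n → ℕ // ∑ i ∈ Finset.range n, f (i : ZMod n) = m} →
        Quot (fun (x y : {p // lrCond n m p}) => ∃ r : ZMod m, lrAct n m r x.1 = y.1),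
      Function.Bijective Φ ∧
      ∀ (f : {f : ZMod n → ℕ // ∑ i ∈ Finset.range n, f (i : ZMod n) = m})
        (x : {p // lrCond n m p}),
        Φ f = Quot.mk _ x ↔
          ∃ r : ZMod m,
            lrAct n m r (lrTranspose n m f.1, ((lrWeight n f.1 : ℕ) : ZMod (n * m))) = x.1 := by
  haveI : NeZero m := ⟨by omega⟩
  haveI : NeZero n := ⟨by omega⟩
  haveI : NeZero (n * m) := ⟨by positivity⟩
  constructor
  · -- freeness
    intro r p _ hfix
    have h2 : p.2 + (r.val : ZMod (n*m)) * (n : ZMod (n*m)) = p.2 := congrArg Prod.snd hfix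
    have h3 : (r.val : ZMod (n*m)) * (n : ZMod (n*m)) = 0 := by linear_combination h2
    have h4 : ((r.val * n : ℕ) : ZMod (n*m)) = 0 := by push_cast; exact h3
    have h5 : (n * m) ∣ r.val * n := (ZMod.natCast_eq_zero_iff _ _).1 h4
    obtain ⟨c, hc⟩ := h5
    have h6 : r.val = m * c := by
      apply Nat.eq_of_mul_eq_mul_right (show 0 < n by omega)
      rw [hc]; ring
    have hvlt : r.val < m := ZMod.val_lt r
    have h7 : r.val = 0 := by
      rcases c with _ | c'
      · omega
      · have : m * (c' + 1) = m * c' + m := by ring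
        omega
    exact (ZMod.val_eq_zero r).1 h7
  · -- bijection
    have hcondP : ∀ f : {f : ZMod n → ℕ // ∑ i ∈ Finset.range n, f (i : ZMod n) = m},
        lrCond n m (lrTranspose n m f.1, ((lrWeight n f.1 : ℕ) : ZMod (n * m))) := by
      intro f
      refine ⟨F1 hn hm f.1 f.2, ?_⟩
      show ZMod.castHom (dvd_mul_left m n) (ZMod m) ((lrWeight n f.1 : ℕ) : ZMod (n * m)) = _
      rw [map_natCast]
      have hF2 := F2 hn hm f.1 f.2
      have hc := congrArg (fun x : ℕ => (x : ZMod m)) hF2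
      push_cast at hc
      rw [ZMod.natCast_self, zero_mul, add_zero] at hc
      exact hc.symm
    have hequiv : Equivalence
        (fun (x y : {p // lrCond n m p}) => ∃ r : ZMod m, lrAct n m r x.1 = y.1) := by
      constructor
      · exact fun x => ⟨0, act_zero hm x.1⟩
      · rintro x y ⟨r, hr⟩
        exact ⟨-r, by rw [← hr, act_add hn hm, neg_add_cancel, act_zero hm]⟩
      · rintro x y z ⟨r, hr⟩ ⟨s, hs⟩
        exact ⟨s + r, by rw [← hs, ← hr, act_add hn hm]⟩
    have hgoodP : ∀ f : {f : ZMod n → ℕ // ∑ i ∈ Finset.range n, f (i : ZMod n) = m},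
        lrGood n m (lrTranspose n m f.1, ((lrWeight n f.1 : ℕ) : ZMod (n * m))) := by
      intro f
      unfold lrGood
      rw [D_pt hn hm f.1 f.2, Nat.mul_div_cancel_left _ (show 0 < m by omega)]
      exact F3 hn hm f.1 f.2
    have hiff : ∀ (f : {f : ZMod n → ℕ // ∑ i ∈ Finset.range n, f (i : ZMod n) = m})
        (x : {p // lrCond n m p}),
        (Quot.mk (fun (x y : {p // lrCond n m p}) => ∃ r : ZMod m, lrAct n m r x.1 = y.1)
          ⟨(lrTranspose n m f.1, ((lrWeight n f.1 : ℕ) : ZMod (n * m))), hcondP f⟩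
          = Quot.mk _ x)
        ↔ ∃ r : ZMod m,
            lrAct n m r (lrTranspose n m f.1, ((lrWeight n f.1 : ℕ) : ZMod (n * m))) = x.1 := by
      intro f x
      rw [Quot.eq, Equivalence.eqvGen_iff hequiv]
    refine ⟨fun f => Quot.mk _ ⟨(lrTranspose n m f.1,
      ((lrWeight n f.1 : ℕ) : ZMod (n * m))), hcondP f⟩, ⟨?_, ?_⟩, fun f x => hiff f x⟩
    · -- injective
      intro f f' h
      obtain ⟨r, hr⟩ := (hiff f ⟨(lrTranspose n m f'.1,
        ((lrWeight n f'.1 : ℕ) : ZMod (n * m))), hcondP f'⟩).1 h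
      obtain ⟨r0, _, huniq⟩ := G1 hn hm
        (lrTranspose n m f.1, ((lrWeight n f.1 : ℕ) : ZMod (n * m))) (hcondP f)
      have hgood0 : lrGood n m (lrAct n m 0
          (lrTranspose n m f.1, ((lrWeight n f.1 : ℕ) : ZMod (n * m)))) := by
        rw [act_zero hm]; exact hgoodP f
      have hgoodr : lrGood n m (lrAct n m r
          (lrTranspose n m f.1, ((lrWeight n f.1 : ℕ) : ZMod (n * m)))) := by
        rw [hr]; exact hgoodP f'
      have hr0 : r = 0 := by rw [huniq r hgoodr, huniq 0 hgood0]
      rw [hr0, act_zero hm] at hr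
      have h1 : lrTranspose n m f.1 = lrTranspose n m f'.1 := congrArg Prod.fst hr
      have hKK : lrK n m f.1 = lrK n m f'.1 := by
        apply Nat.eq_of_mul_eq_mul_left (show 0 < m by omega)
        rw [← D_pt hn hm f.1 f.2, ← D_pt hn hm f'.1 f'.2]
        exact congrArg (lrD n m) hr
      have hcomp : ∀ h : ℕ, 1 ≤ h → h ≤ n - 1 →
          f.1 ((h : ℕ) : ZMod n) = f'.1 ((h : ℕ) : ZMod n) := by
        intro h hh1 hh2
        rw [F5 hn hm f.1 f.2 h hh1 hh2, F5 hn hm f'.1 f'.2 h hh1 hh2, h1, hKK]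
      apply Subtype.ext
      funext i
      by_cases h0 : i.val = 0
      · have hiz : i = 0 := (ZMod.val_eq_zero i).1 h0
        have hs := f.2
        have hs' := f'.2
        rw [sum_range_eq_head_add_Icc (fun j => f.1 ((j : ℕ) : ZMod n)) n (by omega)] at hs
        rw [sum_range_eq_head_add_Icc (fun j => f'.1 ((j : ℕ) : ZMod n)) n (by omega)] at hs'
        rw [Nat.cast_zero] at hs hs'
        have hAB : ∑ j ∈ Icc 1 (n-1), f.1 ((j : ℕ) : ZMod n)
            = ∑ j ∈ Icc 1 (n-1), f'.1 ((j : ℕ) : ZMod n) := by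
          apply Finset.sum_congr rfl
          intro j hj
          simp only [mem_Icc] at hj
          exact hcomp j hj.1 hj.2
        rw [hiz]
        omega
      · have hi : i = ((i.val : ℕ) : ZMod n) := by rw [ZMod.natCast_val, ZMod.cast_id]
        rw [hi]
        exact hcomp i.val (by omega) (by have := ZMod.val_lt i; omega)
    · -- surjective
      intro y
      refine Quot.inductionOn y ?_
      intro x
      obtain ⟨r, hgood, _⟩ := G1 hn hm x.1 x.2
      obtain ⟨q, hq⟩ : ∃ q, lrAct n m r x.1 = q := ⟨_, rfl⟩
      have hcond' : lrCond n m q := hq ▸ cond_act hn hm x.1 x.2 r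
      have hgood' : lrGood n m q := hq ▸ hgood
      have hg : ∑ j ∈ Finset.range m, q.1 (j : ZMod m) = n := hcond'.1
      have hkgood : lrD n m q / m < q.1 0 := hgood'
      have hdvd := D_dvd hn hm q hcond'
      have hkm : m * (lrD n m q / m) = lrD n m q := Nat.mul_div_cancel' hdvd
      have hB1 := B1 hn hm q.1 hg (lrD n m q / m) hkgood
      have hB2 := B2 hn hm q.1 hg (lrD n m q / m) hkgood
      have hB3 := B3 hn hm q.1 hg (lrD n m q / m) hkgood
      have hD : ((lrD n m q : ℕ) : ZMod (n*m))
          = q.2 - ((lrWeight m q.1 : ℕ) : ZMod (n * m)) := by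
        unfold lrD
        rw [ZMod.natCast_val, ZMod.cast_id]
      have hsnd : ((lrWeight n (lrInv n m q.1 (lrD n m q / m)) : ℕ) : ZMod (n*m)) = q.2 := by
        rw [hB3]
        have h5 := congrArg (fun x : ℕ => (x : ZMod (n*m))) hkm
        push_cast at h5 ⊢
        rw [hD] at h5
        linear_combination h5
      have hPq : (lrTranspose n m (lrInv n m q.1 (lrD n m q / m)),
          ((lrWeight n (lrInv n m q.1 (lrD n m q / m)) : ℕ) : ZMod (n*m))) = q :=
        Prod.ext hB2 hsnd
      refine ⟨⟨lrInv n m q.1 (lrD n m q / m), hB1⟩, ?_⟩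
      rw [hiff]
      refine ⟨-r, ?_⟩
      rw [hPq, ← hq, act_add hn hm, neg_add_cancel, act_zero hm]
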